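/- arXiv:2511.05900 — 7 statements merged into one kernel-verified Lean document; each statement's English description precedes it below -/
import Mathlib

section
/- Let a be a positive real number and let α : [0,a) → ℝ be a locally Lipschitz class K function. Let x : [0,∞) → ℝⁿ be a continuously differentiable curve and let V : ℝⁿ × [0,∞) → [0,∞) be continuously differentiable, with V(x(0),0) < a. Suppose that for all t ≥ 0, ∇ₓV(x(t),t)·ẋ(t) + ∂V/∂t(x(t),t) + α(V(x(t),t)) ≤ 0. Then V(x(t),t) → 0 as t → ∞. -/
/-- `α` is a class `K` function on `[0, a)`: continuous, strictly increasing, `α 0 = 0`. -/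
def IsClassKOn (a : ℝ) (α : ℝ → ℝ) : Prop :=
  ContinuousOn α (Set.Ico 0 a) ∧ StrictMonoOn α (Set.Ico 0 a) ∧ α 0 = 0

/-- **Lemma 3.1 (TV-CLF convergence along a trajectory).**
If `V` is a continuously differentiable nonnegative function with `V (x 0, 0) < a`, `α` is a
locally Lipschitz class `K` function on `[0, a)`, `x` is a `C¹` curve, and for all `t ≥ 0`
the total derivative `∇ₓV(x(t),t)·ẋ(t) + ∂V/∂t(x(t),t)` (expressed via the Fréchet derivative
of `V` applied to `(ẋ(t), 1)`) satisfies
`∇ₓV(x(t),t)·ẋ(t) + ∂V/∂t(x(t),t) + α(V(x(t),t)) ≤ 0`,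
then `V(x(t),t) → 0` as `t → ∞`. -/
theorem tv_clf_convergence {n : ℕ} {a : ℝ} (ha : 0 < a) {α : ℝ → ℝ}
    (hK : IsClassKOn a α) (hLip : LocallyLipschitzOn (Set.Ico 0 a) α)
    {x : ℝ → EuclideanSpace ℝ (Fin n)} (hx : ContDiff ℝ 1 x)
    {V : EuclideanSpace ℝ (Fin n) × ℝ → ℝ} (hV : ContDiff ℝ 1 V)
    (hVnonneg : ∀ p, 0 ≤ V p) (hV0 : V (x 0, 0) < a)
    (hdecr : ∀ t, 0 ≤ t →
      fderiv ℝ V (x t, t) (deriv x t, 1) + α (V (x t, t)) ≤ 0) :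
    Filter.Tendsto (fun t => V (x t, t)) Filter.atTop (nhds 0) := by
  obtain ⟨hαcont, hαmono, hα0⟩ := hK
  set v : ℝ → ℝ := fun t => V (x t, t) with hv
  have hderiv : ∀ t, HasDerivAt v (fderiv ℝ V (x t, t) (deriv x t, 1)) t := by
    intro t
    have hxd : HasDerivAt x (deriv x t) t := (hx.differentiable one_ne_zero t).hasDerivAt
    have hγ : HasDerivAt (fun t => ((x t, t) : EuclideanSpace ℝ (Fin n) × ℝ))
        (deriv x t, 1) t := hxd.prodMk (hasDerivAt_id t)
    have h := HasFDerivAt.comp_hasDerivAt (l := V)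
      (f := fun s => ((x s, s) : EuclideanSpace ℝ (Fin n) × ℝ)) t
      ((hV.differentiable one_ne_zero (x t, t)).hasFDerivAt) hγ
    exact h
  have hvdiff : ∀ t, DifferentiableAt ℝ v t := fun t => (hderiv t).differentiableAt
  have hvcont : Continuous v :=
    (hV.continuous).comp ((hx.continuous).prodMk continuous_id)
  have hvnn : ∀ t, 0 ≤ v t := fun t => hVnonneg _
  have hderiv' : ∀ t, 0 ≤ t → deriv v t ≤ -α (v t) := by
    intro t ht
    rw [(hderiv t).deriv]
    linarith [hdecr t ht]
  have hαnn : ∀ r, 0 ≤ r → r < a → 0 ≤ α r := by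
    intro r hr hra
    rcases eq_or_lt_of_le hr with h | h
    · simp [← h, hα0]
    · have := hαmono (Set.mem_Ico.2 ⟨le_rfl, ha⟩) (Set.mem_Ico.2 ⟨hr, hra⟩) h
      linarith
  -- v stays below v 0
  have hb : ∀ t, 0 ≤ t → v t ≤ v 0 := by
    by_contra h
    push_neg at h
    obtain ⟨t₀, ht₀, hvt₀⟩ := h
    have ht₀pos : 0 < t₀ := by
      rcases eq_or_lt_of_le ht₀ with h | h
      · exact absurd hvt₀ (by rw [← h]; exact lt_irrefl _)
      · exact h
    set m : ℝ := (v 0 + min a (v t₀)) / 2 with hm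
    have hmin : v 0 < min a (v t₀) := lt_min hV0 hvt₀
    have hv0m : v 0 < m := by simp only [hm]; linarith
    have hma : m < a := by
      have h1 : min a (v t₀) ≤ a := min_le_left _ _
      simp only [hm]; linarith
    have hmt₀ : m ≤ v t₀ := by
      have h1 : min a (v t₀) ≤ v t₀ := min_le_right _ _
      simp only [hm]; linarith
    set S : Set ℝ := {s | s ∈ Set.Icc 0 t₀ ∧ m ≤ v s} with hS
    have hSne : S.Nonempty := ⟨t₀, ⟨ht₀, le_rfl⟩, hmt₀⟩
    have hSbdd : BddBelow S := ⟨0, fun s hs => hs.1.1⟩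
    have hSclosed : IsClosed S :=
      (isClosed_Icc.inter (isClosed_le continuous_const hvcont) : IsClosed (Set.Icc 0 t₀ ∩ {s | m ≤ v s}))
    set s₀ : ℝ := sInf S with hs₀
    have hs₀mem : s₀ ∈ S := hSclosed.csInf_mem hSne hSbdd
    have hs₀pos : 0 < s₀ := by
      rcases eq_or_lt_of_le hs₀mem.1.1 with h | h
      · exfalso; have := hs₀mem.2; rw [← h] at this; linarith
      · exact h
    -- v < m on [0, s₀)
    have hlt : ∀ s, 0 ≤ s → s < s₀ → v s < m := by
      intro s hs hss
      by_contra hc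
      push_neg at hc
      have : s ∈ S := ⟨⟨hs, hss.le.trans hs₀mem.1.2⟩, hc⟩
      exact absurd (csInf_le hSbdd this) (not_le.2 hss)
    -- v antitone on [0, s₀]
    have hanti : AntitoneOn v (Set.Icc 0 s₀) := by
      apply antitoneOn_of_deriv_nonpos (convex_Icc 0 s₀) hvcont.continuousOn
        (fun t _ => (hvdiff t).differentiableWithinAt)
      intro t ht
      rw [interior_Icc] at ht
      have hva : v t < a := lt_trans (hlt t ht.1.le ht.2) hma
      have := hderiv' t ht.1.le
      linarith [hαnn (v t) (hvnn t) hva]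
    have := hanti (Set.left_mem_Icc.2 hs₀pos.le) (Set.right_mem_Icc.2 hs₀pos.le) hs₀pos.le
    linarith [hs₀mem.2]
  -- v is antitone on [0, ∞)
  have hanti : AntitoneOn v (Set.Ici 0) := by
    apply antitoneOn_of_deriv_nonpos (convex_Ici 0) hvcont.continuousOn
      (fun t _ => (hvdiff t).differentiableWithinAt)
    intro t ht
    rw [interior_Ici] at ht
    have hva : v t < a := lt_of_le_of_lt (hb t ht.le) hV0
    have := hderiv' t ht.le
    linarith [hαnn (v t) (hvnn t) hva]
  -- auxiliary globally antitone function
  set u : ℝ → ℝ := fun t => v (max t 0) with hu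
  have huanti : Antitone u := by
    intro s t hst
    exact hanti (Set.mem_Ici.2 (le_max_right s 0)) (Set.mem_Ici.2 (le_max_right t 0))
      (max_le_max hst le_rfl)
  have hubdd : BddBelow (Set.range u) := ⟨0, by rintro _ ⟨t, rfl⟩; exact hvnn _⟩
  set L : ℝ := ⨅ t, u t with hL
  have hulim : Filter.Tendsto u Filter.atTop (nhds L) := tendsto_atTop_ciInf huanti hubdd
  have huv : u =ᶠ[Filter.atTop] v := by
    filter_upwards [Filter.eventually_ge_atTop (0:ℝ)] with t ht
    simp [hu, max_eq_left ht]
  have hvlim : Filter.Tendsto v Filter.atTop (nhds L) := hulim.congr' huv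
  have hLnn : 0 ≤ L := le_ciInf fun t => hvnn _
  have hLv : ∀ t, L ≤ u t := fun t => ciInf_le hubdd t
  have hLa : L < a := lt_of_le_of_lt ((hLv 0).trans (by simp [hu] : u 0 ≤ v 0)) hV0
  -- L must be 0
  have hL0 : L = 0 := by
    by_contra hc
    have hLpos : 0 < L := lt_of_le_of_ne hLnn (Ne.symm hc)
    have hαL : 0 < α L := by
      have := hαmono (Set.mem_Ico.2 ⟨le_rfl, ha⟩) (Set.mem_Ico.2 ⟨hLnn, hLa⟩) hLpos
      linarith
    -- g t = v t + α L * t is antitone on [0, ∞)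
    set g : ℝ → ℝ := fun t => v t + α L * t with hg
    have hganti : AntitoneOn g (Set.Ici 0) := by
      apply antitoneOn_of_deriv_nonpos (convex_Ici 0)
        (hvcont.add (continuous_const.mul continuous_id)).continuousOn
        (fun t _ => ((hvdiff t).add ((differentiable_id.const_mul _) t)).differentiableWithinAt)
      intro t ht
      rw [interior_Ici] at ht
      have hgd : HasDerivAt g (fderiv ℝ V (x t, t) (deriv x t, 1) + α L) t := by
        have h := (hderiv t).add (((hasDerivAt_id t).const_mul (α L)))
        rw [mul_one] at h
        exact h
      show deriv (fun t => v t + α L * t) t ≤ 0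
      rw [← hg, hgd.deriv]
      have h1 := hderiv' t ht.le
      rw [(hderiv t).deriv] at h1
      have h2 : α L ≤ α (v t) := by
        rcases eq_or_lt_of_le (hLv t) with h | h
        · simp [hu, max_eq_left (Set.mem_Ioi.mp ht).le] at h; rw [← h]
        · have h' : L < v t := by simpa [hu, max_eq_left (Set.mem_Ioi.mp ht).le] using h
          exact (hαmono (Set.mem_Ico.2 ⟨hLnn, hLa⟩)
            (Set.mem_Ico.2 ⟨hvnn t, lt_of_le_of_lt (hb t ht.le) hV0⟩) h').le
      linarith
    set T : ℝ := (v 0 + 1) / α L with hT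
    have hTpos : 0 ≤ T := div_nonneg (by linarith [hvnn 0]) hαL.le
    have := hganti (Set.mem_Ici.2 le_rfl) (Set.mem_Ici.2 hTpos) hTpos
    have hgT : v T + α L * T ≤ v 0 + α L * 0 := this
    have : α L * T = v 0 + 1 := by
      rw [hT, mul_div_assoc']
      exact mul_div_cancel_left₀ _ hαL.ne'
    linarith [hvnn T]
  rw [hL0] at hvlim
  exact hvlim
end

section
/- Let I be a finite nonempty index set, and for each i ∈ I let xᵢ : [0,∞) → ℝ^{nᵢ} be a continuously differentiable curve; write x(t) for the tuple (xᵢ(t))_{i∈I}. Let V : (∏_{i∈I} ℝ^{nᵢ}) × [0,∞) → [0,∞) be continuously differentiable with V(x(0),0) < a, let α : [0,a) → ℝ be a locally Lipschitz class K function, and let (wᵢ)_{i∈I} be real numbers with ∑_{i∈I} wᵢ = 1. Suppose that for every i ∈ I and every t ≥ 0, ∇_{xᵢ}V(x(t),t)·ẋᵢ(t) + wᵢ·(∂V/∂t(x(t),t) + α(V(x(t),t))) ≤ 0. Then V(x(t),t) → 0 as t → ∞. -/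
/-- **Constraint allocation theorem (Theorem 4.1, smooth case).**
If `V(x(0),0) < a`, `α` is a locally Lipschitz class `K` function on `[0, a)`, the priority
weights satisfy `∑ i, wᵢ = 1`, and each agent `i` enforces, for every `t ≥ 0`,
`∇_{xᵢ}V(x(t),t)·ẋᵢ(t) + wᵢ·(∂V/∂t(x(t),t) + α(V(x(t),t))) ≤ 0`,
then the shared Lyapunov value `V(x(t),t)` converges to `0` as `t → ∞`. -/
theorem constraint_allocation_convergence {ι : Type*} [Fintype ι] [Nonempty ι] [DecidableEq ι]
    {n : ι → ℕ} {a : ℝ} (ha : 0 < a) {α : ℝ → ℝ}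
    (hK : IsClassKOn a α) (hLip : LocallyLipschitzOn (Set.Ico 0 a) α)
    {x : ℝ → ∀ i, EuclideanSpace ℝ (Fin (n i))} (hx : ContDiff ℝ 1 x)
    {V : ((∀ i, EuclideanSpace ℝ (Fin (n i))) × ℝ) → ℝ} (hV : ContDiff ℝ 1 V)
    (hVnn : ∀ p, 0 ≤ V p) (hV0 : V (x 0, 0) < a)
    {w : ι → ℝ} (hw : ∑ i, w i = 1)
    (hcon : ∀ i, ∀ t, 0 ≤ t →
      fderiv ℝ V (x t, t) (Pi.single i (deriv x t i), (0:ℝ)) +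
        w i * (fderiv ℝ V (x t, t) (0, 1) + α (V (x t, t))) ≤ 0) :
    Filter.Tendsto (fun t => V (x t, t)) Filter.atTop (nhds 0) := by
  classical
  have hxd : Differentiable ℝ x := hx.differentiable one_ne_zero
  have hVd : Differentiable ℝ V := hV.differentiable one_ne_zero
  set v : ℝ → ℝ := fun t => V (x t, t) with hv_def
  -- derivative of v
  have hder : ∀ t, HasDerivAt v (fderiv ℝ V (x t, t) (deriv x t, 1)) t := by
    intro t
    have h1 : HasDerivAt (fun s => (x s, s)) (deriv x t, (1:ℝ)) t :=
      ((hxd t).hasDerivAt).prodMk (hasDerivAt_id t)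
    exact HasFDerivAt.comp_hasDerivAt (f := fun s => (x s, s)) t
      ((hVd (x t, t)).hasFDerivAt) h1
  have hvdiff : Differentiable ℝ v := fun t => (hder t).differentiableAt
  have hvcont : Continuous v := hvdiff.continuous
  -- differential inequality
  have hineq : ∀ t, 0 ≤ t → deriv v t ≤ -α (v t) := by
    intro t ht
    have hsum : ∑ i, (fderiv ℝ V (x t, t) (Pi.single i (deriv x t i), (0:ℝ)) +
        w i * (fderiv ℝ V (x t, t) (0, 1) + α (V (x t, t)))) ≤ 0 :=
      Finset.sum_nonpos (fun i _ => hcon i t ht)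
    have hsplit : ∑ i, (fderiv ℝ V (x t, t) (Pi.single i (deriv x t i), (0:ℝ)) +
        w i * (fderiv ℝ V (x t, t) (0, 1) + α (V (x t, t))))
        = fderiv ℝ V (x t, t) (deriv x t, (0:ℝ)) +
          (fderiv ℝ V (x t, t) (0, 1) + α (V (x t, t))) := by
      have hsingle : (∑ i, ((Pi.single i (deriv x t i) :
          ∀ j, EuclideanSpace ℝ (Fin (n j))), (0:ℝ))) = (deriv x t, (0:ℝ)) := by
        rw [Prod.ext_iff, Prod.fst_sum, Prod.snd_sum]
        constructor
        · exact Finset.univ_sum_single (deriv x t)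
        · simp
      rw [Finset.sum_add_distrib, ← Finset.sum_mul, hw, one_mul, ← map_sum, hsingle]
    have hkey : fderiv ℝ V (x t, t) (deriv x t, (0:ℝ)) + fderiv ℝ V (x t, t) (0, 1)
        = deriv v t := by
      rw [← map_add, (hder t).deriv]
      norm_num
    have := hsplit ▸ hsum
    have : deriv v t + α (V (x t, t)) ≤ 0 := by linarith [hkey]
    linarith
  have hvnn : ∀ t, 0 ≤ v t := fun t => hVnn _
  have hα0 : α 0 = 0 := hK.2.2
  have hαnn : ∀ r, 0 ≤ r → r < a → 0 ≤ α r := by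
    intro r h0 hr
    rcases eq_or_lt_of_le h0 with h | h
    · simp [← h, hα0]
    · have := hK.2.1 ⟨le_rfl, ha⟩ ⟨h0, hr⟩ h
      linarith [hα0]
  -- v stays below v 0 for t ≥ 0
  have hbound : ∀ t, 0 ≤ t → v t ≤ v 0 := by
    by_contra hcontra
    push_neg at hcontra
    obtain ⟨t, ht0, hvt⟩ := hcontra
    set c : ℝ := min ((v 0 + v t) / 2) ((v 0 + a) / 2) with hc_def
    have hv0a : v 0 < a := hV0
    have hc1 : v 0 < c := by
      apply lt_min <;> linarith
    have hc2 : c < a := by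
      have := min_le_right ((v 0 + v t) / 2) ((v 0 + a) / 2)
      calc c ≤ (v 0 + a) / 2 := this
        _ < a := by linarith
    have hc3 : c ≤ v t := by
      have := min_le_left ((v 0 + v t) / 2) ((v 0 + a) / 2)
      calc c ≤ (v 0 + v t) / 2 := this
        _ ≤ v t := by linarith
    set S : Set ℝ := Set.Icc 0 t ∩ {s | c ≤ v s} with hS_def
    have hSne : S.Nonempty := ⟨t, ⟨ht0, le_rfl⟩, hc3⟩
    have hSclosed : IsClosed S :=
      isClosed_Icc.inter (isClosed_le continuous_const hvcont)
    have hSbdd : BddBelow S := ⟨0, fun s hs => hs.1.1⟩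
    set u : ℝ := sInf S with hu_def
    have huS : u ∈ S := hSclosed.csInf_mem hSne hSbdd
    have hu0 : 0 ≤ u := huS.1.1
    have hlt : ∀ s, 0 ≤ s → s < u → v s < c := by
      intro s hs hsu
      by_contra h
      push_neg at h
      have hsS : s ∈ S := ⟨⟨hs, hsu.le.trans huS.1.2⟩, h⟩
      exact absurd (csInf_le hSbdd hsS) (not_le.mpr hsu)
    have hant : AntitoneOn v (Set.Icc 0 u) := by
      apply antitoneOn_of_deriv_nonpos (convex_Icc 0 u) hvcont.continuousOn
        hvdiff.differentiableOn
      intro s hs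
      rw [interior_Icc] at hs
      have hvs : v s < c := hlt s hs.1.le hs.2
      have : 0 ≤ α (v s) := hαnn _ (hvnn s) (lt_trans hvs hc2)
      have := hineq s hs.1.le
      linarith
    have : v u ≤ v 0 := hant ⟨le_rfl, hu0⟩ ⟨hu0, le_rfl⟩ hu0
    have : c ≤ v u := huS.2
    linarith
  -- v antitone on [0, ∞)
  have hva : ∀ t, 0 ≤ t → v t < a := fun t ht => lt_of_le_of_lt (hbound t ht) hV0
  have hderiv_nonpos : ∀ s ∈ interior (Set.Ici (0:ℝ)), deriv v s ≤ 0 := by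
    intro s hs
    rw [interior_Ici] at hs
    have hle := hineq s hs.le
    have := hαnn _ (hvnn s) (hva s hs.le)
    linarith
  have hantIci : AntitoneOn v (Set.Ici 0) :=
    antitoneOn_of_deriv_nonpos (convex_Ici 0) hvcont.continuousOn
      hvdiff.differentiableOn hderiv_nonpos
  -- monotone convergence
  set g : ℝ → ℝ := fun t => v (max t 0) with hg_def
  have hganti : Antitone g := by
    intro s t hst
    exact hantIci (le_max_right s 0) (le_max_right t 0) (max_le_max hst le_rfl)
  have hgbdd : BddBelow (Set.range g) := by
    refine ⟨0, ?_⟩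
    rintro _ ⟨t, rfl⟩
    exact hvnn _
  have hglim : Filter.Tendsto g Filter.atTop (nhds (⨅ t, g t)) :=
    tendsto_atTop_ciInf hganti hgbdd
  set L : ℝ := ⨅ t, g t with hL_def
  have hL0 : 0 ≤ L := le_ciInf (fun t => hvnn _)
  have hLle : ∀ t, 0 ≤ t → L ≤ v t := by
    intro t ht
    have h1 := ciInf_le hgbdd t
    have h2 : g t = v t := by simp [hg_def, max_eq_left ht]
    rw [h2] at h1
    exact h1
  -- L = 0
  have hLzero : L = 0 := by
    by_contra hL
    have hLpos : 0 < L := lt_of_le_of_ne hL0 (Ne.symm hL)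
    have hLa : L < a := lt_of_le_of_lt (hLle 0 le_rfl) hV0
    have hαL : 0 < α L := by
      have := hK.2.1 ⟨le_rfl, ha⟩ ⟨hL0, hLa⟩ hLpos
      linarith [hα0]
    have hαmono : ∀ t, 0 ≤ t → α L ≤ α (v t) := by
      intro t ht
      exact hK.2.1.monotoneOn ⟨hL0, hLa⟩ ⟨hvnn t, hva t ht⟩ (hLle t ht)
    -- the function v + αL * t is antitone on [0, ∞)
    set h : ℝ → ℝ := fun t => v t + α L * t with hh_def
    have hhder : ∀ t, HasDerivAt h (deriv v t + α L) t := by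
      intro t
      have := ((hder t).add ((hasDerivAt_id t).const_mul (α L)))
      exact this.congr_deriv (by rw [(hder t).deriv]; ring)
    have hhant : AntitoneOn h (Set.Ici 0) := by
      apply antitoneOn_of_deriv_nonpos (convex_Ici 0)
        (hvcont.add (continuous_const.mul continuous_id)).continuousOn
        (fun s _ => ((hhder s).differentiableAt).differentiableWithinAt)
      intro s hs
      rw [interior_Ici] at hs
      have hds : deriv h s = deriv v s + α L := (hhder s).deriv
      rw [show (v + (fun x => α L) * id) = h from rfl, hds]
      have h1 := hineq s hs.le
      have h2 := hαmono s hs.le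
      linarith
    set T : ℝ := (v 0 + 1) / α L with hT_def
    have hTpos : 0 < T := div_pos (by linarith [hvnn 0]) hαL
    have := hhant (Set.self_mem_Ici) (Set.mem_Ici.mpr hTpos.le) hTpos.le
    have hhT : v T + α L * T ≤ v 0 + α L * 0 := this
    have : α L * T = v 0 + 1 := by
      rw [hT_def, mul_div_cancel₀]
      exact ne_of_gt hαL
    have := hvnn T
    linarith
  rw [← hLzero]
  refine hglim.congr' ?_
  filter_upwards [Filter.eventually_ge_atTop (0:ℝ)] with t ht
  simp [hg_def, max_eq_left ht]
end

section
/- Let I be a finite nonempty index set, and for each i ∈ I let xᵢ : [0,∞) → ℝ^{nᵢ} be a continuously differentiable curve; write x(t) for the tuple (xᵢ(t))_{i∈I}. For each i ∈ I let Vᵢ : (∏_{i∈I} ℝ^{nᵢ}) × [0,∞) → [0,∞) be continuously differentiable, set V = ∑_{i∈I} Vᵢ, and assume V(x(0),0) < a. Let α : [0,a) → ℝ be a locally Lipschitz subadditive class K function. Suppose that for every i ∈ I and every t ≥ 0, ∇_{xᵢ}V(x(t),t)·ẋᵢ(t) + ∂Vᵢ/∂t(x(t),t) + α(Vᵢ(x(t),t))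 ≤ 0. Then V(x(t),t) → 0 as t → ∞. -/
/-- `α` is subadditive on `[0, a)`: `α (s + r) ≤ α s + α r` whenever `s, r, s + r ∈ [0, a)`. -/
def SubadditiveOn (a : ℝ) (α : ℝ → ℝ) : Prop :=
  ∀ s r : ℝ, s ∈ Set.Ico 0 a → r ∈ Set.Ico 0 a → s + r ∈ Set.Ico 0 a →
    α (s + r) ≤ α s + α r

/-- Subadditivity over finite sums. -/
lemma alpha_sum_le {ι : Type*} [Fintype ι] [DecidableEq ι] {a : ℝ} (ha : 0 < a) {α : ℝ → ℝ}
    (hα0 : α 0 = 0) (hsub : SubadditiveOn a α) {f : ι → ℝ}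
    (hf : ∀ i, 0 ≤ f i) (hfa : (∑ i, f i) < a) :
    α (∑ i, f i) ≤ ∑ i, α (f i) := by
  have key : ∀ s : Finset ι, α (∑ i ∈ s, f i) ≤ ∑ i ∈ s, α (f i) := by
    intro s
    induction s using Finset.induction_on with
    | empty => simp [hα0]
    | @insert i s his ih =>
      have hsle : ∀ u : Finset ι, (∑ j ∈ u, f j) < a := fun u =>
        lt_of_le_of_lt
          (Finset.sum_le_sum_of_subset_of_nonneg (Finset.subset_univ u)
            (fun j _ _ => hf j)) hfa
      have hsnn : ∀ u : Finset ι, 0 ≤ ∑ j ∈ u, f j := fun u =>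
        Finset.sum_nonneg fun j _ => hf j
      rw [Finset.sum_insert his, Finset.sum_insert his]
      calc α (f i + ∑ j ∈ s, f j)
          ≤ α (f i) + α (∑ j ∈ s, f j) := by
            refine hsub _ _ ⟨hf i, lt_of_le_of_lt ?_ hfa⟩ ⟨hsnn s, hsle s⟩
              ⟨add_nonneg (hf i) (hsnn s), ?_⟩
            · exact Finset.single_le_sum (fun j _ => hf j) (Finset.mem_univ i)
            · have := hsle (insert i s)
              rwa [Finset.sum_insert his] at this
        _ ≤ α (f i) + ∑ j ∈ s, α (f j) := by linarith [ih]
  exact key Finset.univ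

/-- **Disentanglement theorem for private-entangled Lyapunov functions (Theorem 4.2, smooth
case).** With `V = ∑ i, Vᵢ`, `V(x(0),0) < a`, and a locally Lipschitz subadditive class `K`
function `α` on `[0, a)`, if each agent `i` enforces, for every `t ≥ 0`,
`∇_{xᵢ}V(x(t),t)·ẋᵢ(t) + ∂Vᵢ/∂t(x(t),t) + α(Vᵢ(x(t),t)) ≤ 0`,
then `V(x(t),t) → 0` as `t → ∞`. -/
theorem disentangled_convergence {ι : Type*} [Fintype ι] [Nonempty ι] [DecidableEq ι]
    {n : ι → ℕ} {a : ℝ} (ha : 0 < a) {α : ℝ → ℝ}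
    (hK : IsClassKOn a α) (hLip : LocallyLipschitzOn (Set.Ico 0 a) α)
    (hsub : SubadditiveOn a α)
    {x : ℝ → ∀ i, EuclideanSpace ℝ (Fin (n i))} (hx : ContDiff ℝ 1 x)
    {V : ι → ((∀ i, EuclideanSpace ℝ (Fin (n i))) × ℝ) → ℝ}
    (hV : ∀ i, ContDiff ℝ 1 (V i)) (hVnn : ∀ i p, 0 ≤ V i p)
    (hV0 : (∑ j, V j (x 0, 0)) < a)
    (hcon : ∀ i, ∀ t, 0 ≤ t →
      fderiv ℝ (fun p => ∑ j, V j p) (x t, t) (Pi.single i (deriv x t i), (0:ℝ)) +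
        fderiv ℝ (V i) (x t, t) (0, 1) + α (V i (x t, t)) ≤ 0) :
    Filter.Tendsto (fun t => ∑ j, V j (x t, t)) Filter.atTop (nhds 0) := by
  obtain ⟨hαc, hαm, hα0⟩ := hK
  set F : ((∀ i, EuclideanSpace ℝ (Fin (n i))) × ℝ) → ℝ := fun p => ∑ j, V j p with hFdef
  have hF : ContDiff ℝ 1 F := ContDiff.sum fun i _ => hV i
  set W : ℝ → ℝ := fun t => F (x t, t) with hWdef
  -- basic facts
  have hWnn : ∀ t, 0 ≤ W t := fun t => Finset.sum_nonneg fun j _ => hVnn j _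
  have hxd : ∀ t, HasDerivAt x (deriv x t) t := fun t =>
    ((hx.differentiable one_ne_zero) t).hasDerivAt
  have hg : ∀ t, HasDerivAt (fun s => (x s, s)) (deriv x t, 1) t := fun t =>
    (hxd t).prodMk (hasDerivAt_id t)
  have hWd : ∀ t, HasDerivAt W (fderiv ℝ F (x t, t) (deriv x t, 1)) t := by
    intro t
    have h := HasFDerivAt.comp_hasDerivAt (f := fun s => (x s, s)) t
      ((hF.differentiable one_ne_zero) (x t, t)).hasFDerivAt (hg t)
    exact h
  set D : ℝ → ℝ := fun t => fderiv ℝ F (x t, t) (deriv x t, 1) with hDdef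
  have hWdiff : Differentiable ℝ W := fun t => (hWd t).differentiableAt
  have hderivW : ∀ t, deriv W t = D t := fun t => (hWd t).deriv
  have hWcont : Continuous W := hWdiff.continuous
  -- decomposition of the derivative
  have hdecomp : ∀ t, D t =
      (∑ i, fderiv ℝ F (x t, t) (Pi.single i (deriv x t i), (0:ℝ))) +
        ∑ i, fderiv ℝ (V i) (x t, t) ((0 : ∀ i, EuclideanSpace ℝ (Fin (n i))), (1:ℝ)) := by
    intro t
    have hsingle : (∑ i, (Pi.single i (deriv x t i), (0:ℝ)) :
        (∀ i, EuclideanSpace ℝ (Fin (n i))) × ℝ) = (deriv x t, 0) := by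
      rw [Prod.ext_iff]
      constructor
      · simp only [Prod.fst_sum]
        funext j
        simp [Finset.sum_apply, Fintype.sum_pi_single]
      · simp [Prod.snd_sum]
    have hsum : fderiv ℝ F (x t, t)
        ((0 : ∀ i, EuclideanSpace ℝ (Fin (n i))), (1:ℝ)) =
        ∑ i, fderiv ℝ (V i) (x t, t) ((0 : ∀ i, EuclideanSpace ℝ (Fin (n i))), (1:ℝ)) := by
      rw [hFdef]
      rw [fderiv_fun_sum fun i _ => ((hV i).differentiable one_ne_zero) (x t, t)]
      simp [ContinuousLinearMap.sum_apply]
    have : ((deriv x t, (1:ℝ)) : (∀ i, EuclideanSpace ℝ (Fin (n i))) × ℝ) =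
        (∑ i, (Pi.single i (deriv x t i), (0:ℝ))) +
          ((0 : ∀ i, EuclideanSpace ℝ (Fin (n i))), (1:ℝ)) := by
      rw [hsingle]; simp [Prod.ext_iff]
    rw [hDdef]
    simp only [this, map_add, map_sum, hsum]
  -- the key differential inequality
  have hkey : ∀ t, 0 ≤ t → W t < a → D t ≤ -α (W t) := by
    intro t ht hta
    have hsum_con : (∑ i, (fderiv ℝ F (x t, t) (Pi.single i (deriv x t i), (0:ℝ)) +
        fderiv ℝ (V i) (x t, t) ((0 : ∀ i, EuclideanSpace ℝ (Fin (n i))), (1:ℝ)))) ≤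
        ∑ i, (-α (V i (x t, t))) := by
      refine Finset.sum_le_sum fun i _ => ?_
      have := hcon i t ht
      linarith
    have hαsum : α (W t) ≤ ∑ i, α (V i (x t, t)) :=
      alpha_sum_le ha hα0 hsub (fun i => hVnn i _) hta
    have hD : D t ≤ ∑ i, (-α (V i (x t, t))) := by
      rw [hdecomp t, ← Finset.sum_add_distrib]
      exact hsum_con
    rw [Finset.sum_neg_distrib] at hD
    linarith
  -- α is nonneg on [0, a)
  have hαnn : ∀ y, 0 ≤ y → y < a → 0 ≤ α y := by
    intro y hy hya
    rcases eq_or_lt_of_le hy with h | h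
    · rw [← h, hα0]
    · have := hαm (Set.mem_Ico.2 ⟨le_rfl, ha⟩) (Set.mem_Ico.2 ⟨hy, hya⟩) h
      rw [hα0] at this; exact le_of_lt this
  -- W stays below a on [0, ∞)
  have hWa : ∀ t, 0 ≤ t → W t < a := by
    intro t ht
    by_contra hcontra
    push_neg at hcontra
    set A : Set ℝ := {s | 0 ≤ s ∧ a ≤ W s} with hAdef
    have hAne : A.Nonempty := ⟨t, ht, hcontra⟩
    have hAclosed : IsClosed A :=
      (isClosed_Ici.preimage continuous_id).inter (isClosed_Ici.preimage hWcont)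
    have hAbdd : BddBelow A := ⟨0, fun s hs => hs.1⟩
    set T := sInf A with hTdef
    have hTA : T ∈ A := hAclosed.csInf_mem hAne hAbdd
    have hT0 : 0 ≤ T := hTA.1
    have hTW : a ≤ W T := hTA.2
    have hTpos : 0 < T := by
      rcases eq_or_lt_of_le hT0 with h | h
      · exfalso; rw [← h] at hTW; exact absurd hTW (not_le.2 hV0)
      · exact h
    have hlt : ∀ s, 0 ≤ s → s < T → W s < a := by
      intro s hs hsT
      by_contra hc
      push_neg at hc
      exact absurd (csInf_le hAbdd ⟨hs, hc⟩) (not_le.2 hsT)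
    have hanti : AntitoneOn W (Set.Icc 0 T) := by
      refine antitoneOn_of_deriv_nonpos (convex_Icc 0 T) hWcont.continuousOn
        (hWdiff.differentiableOn) ?_
      intro s hs
      rw [interior_Icc] at hs
      rw [hderivW s]
      have hWsa : W s < a := hlt s (le_of_lt hs.1) hs.2
      have := hkey s (le_of_lt hs.1) hWsa
      have := hαnn (W s) (hWnn s) hWsa
      linarith
    have := hanti (Set.mem_Icc.2 ⟨le_rfl, hT0⟩) (Set.mem_Icc.2 ⟨hT0, le_rfl⟩) hT0
    have : W T ≤ W 0 := this
    have : a ≤ W 0 := le_trans hTW this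
    exact absurd this (not_le.2 hV0)
  -- W is antitone on [0, ∞)
  have hanti : AntitoneOn W (Set.Ici 0) := by
    refine antitoneOn_of_deriv_nonpos (convex_Ici 0) hWcont.continuousOn
      hWdiff.differentiableOn ?_
    intro s hs
    rw [interior_Ici] at hs
    rw [hderivW s]
    have hWsa : W s < a := hWa s (le_of_lt hs)
    have := hkey s (le_of_lt hs) hWsa
    have := hαnn (W s) (hWnn s) hWsa
    linarith
  -- main convergence argument
  rw [Metric.tendsto_atTop]
  intro ε hε
  -- find t₀ ≥ 0 with W t₀ < ε
  have hexists : ∃ t₀, 0 ≤ t₀ ∧ W t₀ < ε := by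
    by_cases hcase : W 0 < ε
    · exact ⟨0, le_rfl, hcase⟩
    push_neg at hcase
    have hεa : ε < a := lt_of_le_of_lt hcase (hWa 0 le_rfl)
    have hαε : 0 < α ε := by
      have := hαm (Set.mem_Ico.2 ⟨le_rfl, ha⟩) (Set.mem_Ico.2 ⟨le_of_lt hε, hεa⟩) hε
      rwa [hα0] at this
    by_contra hc
    push_neg at hc
    -- then W t ≥ ε for all t ≥ 0, derive contradiction
    have hWge : ∀ s, 0 ≤ s → ε ≤ W s := fun s hs => hc s hs
    set G : ℝ → ℝ := fun s => W s + α ε * s with hGdef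
    have hGanti : AntitoneOn G (Set.Ici 0) := by
      refine antitoneOn_of_deriv_nonpos (convex_Ici 0)
        (hWcont.add (continuous_const.mul continuous_id)).continuousOn
        ((hWdiff.add ((differentiable_const _).mul differentiable_id)).differentiableOn) ?_
      intro s hs
      rw [interior_Ici] at hs
      have hds : HasDerivAt G (D s + α ε) s := by
        have h1 : HasDerivAt (fun u => α ε * u) (α ε) s := by
          simpa using (hasDerivAt_id s).const_mul (α ε)
        exact (hWd s).add h1
      rw [hds.deriv]
      have hWsa : W s < a := hWa s (le_of_lt hs)
      have hkey' := hkey s (le_of_lt hs) hWsa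
      have hmono : α ε ≤ α (W s) := by
        rcases eq_or_lt_of_le (hWge s (le_of_lt hs)) with h | h
        · rw [h]
        · exact le_of_lt (hαm (Set.mem_Ico.2 ⟨le_of_lt hε, hεa⟩)
            (Set.mem_Ico.2 ⟨hWnn s, hWsa⟩) h)
      linarith
    set T := W 0 / α ε + 1 with hTdef
    have hT0 : 0 ≤ T := by
      have h1 : 0 ≤ W 0 / α ε := div_nonneg (hWnn 0) hαε.le
      rw [hTdef]; linarith
    have := hGanti (Set.mem_Ici.2 le_rfl) (Set.mem_Ici.2 hT0) hT0
    have hGT : W T + α ε * T ≤ W 0 := by simpa [hGdef] using this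
    have hαT : W 0 < α ε * T := by
      rw [hTdef, mul_add, mul_one, mul_div_cancel₀ _ (ne_of_gt hαε)]
      linarith
    have : W T < 0 := by linarith
    exact absurd this (not_lt.2 (hWnn T))
  obtain ⟨t₀, ht₀, hWt₀⟩ := hexists
  refine ⟨t₀, fun s hs => ?_⟩
  have hs0 : 0 ≤ s := le_trans ht₀ hs
  have : W s ≤ W t₀ := hanti (Set.mem_Ici.2 ht₀) (Set.mem_Ici.2 hs0) hs
  rw [Real.dist_eq, abs_sub_comm]
  rw [abs_of_nonpos (by linarith [hWnn s] : (0:ℝ) - W s ≤ 0)]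
  simp only [zero_sub, neg_neg] at *
  calc W s ≤ W t₀ := this
    _ < ε := hWt₀
end

section
/- Let γ : ℝ → ℝ be a locally Lipschitz, continuous, strictly increasing function with γ(0) = 0. Let x : [0,∞) → ℝⁿ be a continuously differentiable curve and h : ℝⁿ × [0,∞) → ℝ continuously differentiable, and suppose that for all t ≥ 0, ∇ₓh(x(t),t)·ẋ(t) + ∂h/∂t(x(t),t) + γ(h(x(t),t)) ≥ 0. If h(x(0),0) ≥ 0, then h(x(t),t) ≥ 0 for all t ≥ 0. -/
/-- **Forward invariance part of Lemma 3.2 (time-varying control barrier functions).**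
Let `γ : ℝ → ℝ` be locally Lipschitz, continuous, strictly increasing with `γ 0 = 0`,
`x` a `C¹` curve, and `h` continuously differentiable. If for all `t ≥ 0`,
`∇ₓh(x(t),t)·ẋ(t) + ∂h/∂t(x(t),t) + γ(h(x(t),t)) ≥ 0` (the total derivative expressed via the
Fréchet derivative of `h` applied to `(ẋ(t), 1)`), and `h(x(0),0) ≥ 0`, then
`h(x(t),t) ≥ 0` for all `t ≥ 0`. -/
theorem tv_cbf_forward_invariance {n : ℕ} {γ : ℝ → ℝ}
    (hLip : LocallyLipschitz γ) (hCont : Continuous γ)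
    (hMono : StrictMono γ) (hγ0 : γ 0 = 0)
    {x : ℝ → EuclideanSpace ℝ (Fin n)} (hx : ContDiff ℝ 1 x)
    {h : EuclideanSpace ℝ (Fin n) × ℝ → ℝ} (hh : ContDiff ℝ 1 h)
    (hineq : ∀ t, 0 ≤ t →
      0 ≤ fderiv ℝ h (x t, t) (deriv x t, 1) + γ (h (x t, t)))
    (h0 : 0 ≤ h (x 0, 0)) :
    ∀ t, 0 ≤ t → 0 ≤ h (x t, t) := by
  set v : ℝ → ℝ := fun t => h (x t, t) with hv
  -- v is C¹ and its derivative is the given total derivative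
  have hc : ContDiff ℝ 1 (fun t : ℝ => ((x t, t) : EuclideanSpace ℝ (Fin n) × ℝ)) :=
    hx.prodMk contDiff_id
  have hvderiv : ∀ t, HasDerivAt v (fderiv ℝ h (x t, t) (deriv x t, 1)) t := by
    intro t
    rw [hv]
    have hxd : HasDerivAt x (deriv x t) t :=
      ((hx.differentiable one_ne_zero) t).hasDerivAt
    have hpd : HasDerivAt (fun t : ℝ => ((x t, t) : EuclideanSpace ℝ (Fin n) × ℝ))
        (deriv x t, 1) t := hxd.prodMk (hasDerivAt_id t)
    have hhd : HasFDerivAt h (fderiv ℝ h (x t, t)) (x t, t) :=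
      ((hh.differentiable one_ne_zero) (x t, t)).hasFDerivAt
    have := HasFDerivAt.comp_hasDerivAt (f := fun t : ℝ => ((x t, t) : EuclideanSpace ℝ (Fin n) × ℝ)) t hhd hpd
    exact this
  have hvcont : Continuous v := by
    exact hh.continuous.comp (continuous_prodMk.mpr ⟨hx.continuous, continuous_id⟩)
  by_contra hcon
  push_neg at hcon
  obtain ⟨t₁, ht₁, hvt₁⟩ := hcon
  -- the set of times in [0,t₁] where v ≥ 0
  set S : Set ℝ := {t | t ∈ Set.Icc 0 t₁ ∧ 0 ≤ v t} with hS
  have hSne : S.Nonempty := ⟨0, ⟨le_rfl, ht₁⟩, h0⟩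
  have hSbdd : BddAbove S := ⟨t₁, fun t ht => ht.1.2⟩
  have hSclosed : IsClosed S := by
    have : S = Set.Icc 0 t₁ ∩ v ⁻¹' Set.Ici 0 := by
      ext t; simp [hS, Set.mem_Icc, and_assoc]
    rw [this]
    exact isClosed_Icc.inter (isClosed_Ici.preimage hvcont)
  set s := sSup S with hs
  have hsS : s ∈ S := hSclosed.csSup_mem hSne hSbdd
  have hs0 : 0 ≤ s := hsS.1.1
  have hst₁ : s ≤ t₁ := hsS.1.2
  have hvs : 0 ≤ v s := hsS.2
  have hslt : s < t₁ := by
    rcases hst₁.lt_or_eq with h' | h'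
    · exact h'
    · exfalso; rw [h'] at hvs; linarith
  -- on (s, t₁], v < 0
  have hneg : ∀ u, s < u → u ≤ t₁ → v u < 0 := by
    intro u hu hut
    by_contra hnn
    push_neg at hnn
    have : u ∈ S := ⟨⟨hs0.trans hu.le, hut⟩, hnn⟩
    exact absurd (le_csSup hSbdd this) (not_le.mpr hu)
  -- v is monotone on [s, t₁] since v ≤ 0 there implies v' ≥ -γ(v) ≥ 0
  have hmono : MonotoneOn v (Set.Icc s t₁) := by
    apply monotoneOn_of_deriv_nonneg (convex_Icc s t₁) hvcont.continuousOn
    · intro u hu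
      exact (hvderiv u).differentiableAt.differentiableWithinAt
    · intro u hu
      rw [interior_Icc] at hu
      rw [(hvderiv u).deriv]
      have hu0 : 0 ≤ u := hs0.trans hu.1.le
      have hγ : γ (v u) ≤ 0 := by
        have := hMono.monotone (le_of_lt (hneg u hu.1 hu.2.le))
        simpa [hγ0] using this
      have := hineq u hu0
      linarith
  have := hmono ⟨le_rfl, hst₁⟩ ⟨hst₁, le_rfl⟩ hst₁
  have : (0:ℝ) ≤ v t₁ := hvs.trans this
  exact absurd this (not_le.mpr hvt₁)
end

section
/- Let γ : ℝ → ℝ be a locally Lipschitz extended class K∞ function. Let x : [0,∞) → ℝⁿ be a continuously differentiable curve and h : ℝⁿ × [0,∞) → ℝ continuously differentiable, and suppose that for all t ≥ 0, ∇ₓh(x(t),t)·ẋ(t) + ∂h/∂t(x(t),t) + γ(h(x(t),t)) ≥ 0. If h(x(0),0) < 0, then h(x(t),t) ≥ z(t) for all t ≥ 0, where z is the unique solution of ż = −γ(z) with z(0) = h(x(0),0); in particular, liminf_{t→∞} h(x(t),t) ≥ 0. -/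
open Set Filter Topology

private lemma grow_aux {g g' : ℝ → ℝ} (hg : ∀ t, HasDerivAt g (g' t) t) {a b δ : ℝ}
    (hab : a ≤ b) (hδ : ∀ s, s ∈ Set.Icc a b → δ ≤ g' s) :
    g a + δ * (b - a) ≤ g b := by
  have hd : ∀ s : ℝ, HasDerivAt (fun u => g u - δ * u) (g' s - δ) s := by
    intro s
    have := (hg s).sub ((hasDerivAt_id s).const_mul δ); simp only [mul_one] at this; exact this
  have h1 : MonotoneOn (fun u => g u - δ * u) (Set.Icc a b) := by
    apply monotoneOn_of_deriv_nonneg (convex_Icc a b)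
    · exact fun s _ => ((hd s).continuousAt).continuousWithinAt
    · exact fun s _ => ((hd s).differentiableAt).differentiableWithinAt
    · intro s hs
      rw [interior_Icc] at hs
      rw [(hd s).deriv]
      have := hδ s (Ioo_subset_Icc_self hs)
      linarith
  have := h1 ⟨le_rfl, hab⟩ ⟨hab, le_rfl⟩ hab
  dsimp at this
  linarith



/-- **Attractivity part of Lemma 3.2 (time-varying control barrier functions).**
Let `γ` be a locally Lipschitz extended class `K∞` function (continuous, strictly increasing,
`γ 0 = 0`, `γ(s) → ±∞` as `s → ±∞`). If for all `t ≥ 0`,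
`∇ₓh(x(t),t)·ẋ(t) + ∂h/∂t(x(t),t) + γ(h(x(t),t)) ≥ 0` and `h(x(0),0) < 0`, then
`h(x(t),t) ≥ z(t)` for all `t ≥ 0` for (any, hence the unique) solution `z` of
`ż = −γ(z)`, `z(0) = h(x(0),0)`; in particular `liminf_{t→∞} h(x(t),t) ≥ 0`. -/
theorem tv_cbf_attractivity {n : ℕ} {γ : ℝ → ℝ}
    (hLip : LocallyLipschitz γ) (hCont : Continuous γ)
    (hMono : StrictMono γ) (hγ0 : γ 0 = 0)
    (htop : Filter.Tendsto γ Filter.atTop Filter.atTop)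
    (hbot : Filter.Tendsto γ Filter.atBot Filter.atBot)
    {x : ℝ → EuclideanSpace ℝ (Fin n)} (hx : ContDiff ℝ 1 x)
    {h : EuclideanSpace ℝ (Fin n) × ℝ → ℝ} (hh : ContDiff ℝ 1 h)
    (hineq : ∀ t, 0 ≤ t →
      0 ≤ fderiv ℝ h (x t, t) (deriv x t, 1) + γ (h (x t, t)))
    (h0 : h (x 0, 0) < 0) :
    (∀ z : ℝ → ℝ, z 0 = h (x 0, 0) →
      (∀ t, 0 ≤ t → HasDerivWithinAt z (-γ (z t)) (Set.Ici 0) t) →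
      ∀ t, 0 ≤ t → z t ≤ h (x t, t)) ∧
    0 ≤ Filter.liminf (fun t => h (x t, t)) Filter.atTop := by
  set g : ℝ → ℝ := fun t => h (x t, t) with hgdef
  set g' : ℝ → ℝ := fun t => fderiv ℝ h (x t, t) (deriv x t, 1) with hg'def
  have hg : ∀ t, HasDerivAt g (g' t) t := by
    intro t
    have hxd : HasDerivAt x (deriv x t) t :=
      ((hx.differentiable one_ne_zero) t).hasDerivAt
    have hp : HasDerivAt (fun s => (x s, s)) (deriv x t, (1 : ℝ)) t :=
      hxd.prodMk (hasDerivAt_id t)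
    have hhf : HasFDerivAt h (fderiv ℝ h (x t, t)) (x t, t) :=
      ((hh.differentiable one_ne_zero) (x t, t)).hasFDerivAt
    have key : HasDerivAt (fun s : ℝ => h (x s, s))
        (fderiv ℝ h (x t, t) (deriv x t, 1)) t :=
      HasFDerivAt.comp_hasDerivAt (f := fun s : ℝ => (x s, s)) t hhf hp
    exact key
  have hbound : ∀ t, 0 ≤ t → -γ (g t) ≤ g' t := by
    intro t ht; have := hineq t ht; dsimp [g, g']; linarith
  constructor
  · -- comparison part
    intro z hz0 hz' t₁ ht₁
    by_contra hcon
    push_neg at hcon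
    set w : ℝ → ℝ := fun s => z s - g s with hwdef
    have hw0 : w 0 = 0 := by simp [w, hz0, g]
    have hwt₁ : 0 < w t₁ := by simp only [w]; linarith
    have hzcont : ContinuousOn z (Ici (0:ℝ)) :=
      fun s hs => (hz' s hs).continuousWithinAt
    have hwcont : ContinuousOn w (Ici (0:ℝ)) :=
      hzcont.sub (fun s _ => (hg s).continuousAt.continuousWithinAt)
    set S : Set ℝ := Icc 0 t₁ ∩ w ⁻¹' (Iic 0) with hSdef
    have hScl : IsClosed S :=
      (hwcont.mono (Icc_subset_Ici_self)).preimage_isClosed_of_isClosed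
        isClosed_Icc isClosed_Iic
    have hScomp : IsCompact S :=
      isCompact_Icc.of_isClosed_subset hScl Set.inter_subset_left
    have hSne : S.Nonempty := ⟨0, ⟨le_rfl, ht₁⟩, by simp [hw0]⟩
    obtain ⟨t₂, ht₂def⟩ : ∃ t₂ : ℝ, t₂ = sSup S := ⟨_, rfl⟩
    have ht₂S : t₂ ∈ S := ht₂def ▸ hScomp.sSup_mem hSne
    have ht₂0 : 0 ≤ t₂ := ht₂S.1.1
    have ht₂le : t₂ ≤ t₁ := ht₂S.1.2
    have ht₂w : w t₂ ≤ 0 := ht₂S.2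
    have ht₂lt : t₂ < t₁ := lt_of_le_of_ne ht₂le (by rintro rfl; linarith)
    have hpos : ∀ s, t₂ < s → s ≤ t₁ → 0 < w s := by
      intro s hs1 hs2
      by_contra hle
      push_neg at hle
      have : s ∈ S := ⟨⟨le_trans ht₂0 hs1.le, hs2⟩, hle⟩
      exact absurd (ht₂def ▸ le_csSup hScomp.bddAbove this) (not_le.mpr hs1)
    have hw₂ : w t₂ = 0 := by
      refine le_antisymm ht₂w ?_
      have hne : (𝓝[>] t₂).NeBot := nhdsGT_neBot t₂
      have htend : Tendsto w (𝓝[>] t₂) (𝓝 (w t₂)) :=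
        ((hwcont t₂ ht₂0).mono (Ioi_subset_Ici ht₂0)).tendsto
      refine ge_of_tendsto htend ?_
      filter_upwards [Ioc_mem_nhdsGT ht₂lt] with s hs
      exact (hpos s hs.1 hs.2).le
    -- local Lipschitz data at z t₂
    obtain ⟨K, U, hU, hKU⟩ := hLip (z t₂)
    obtain ⟨r, hr, hball⟩ := Metric.mem_nhds_iff.1 hU
    have hgz : g t₂ = z t₂ := by simp only [w] at hw₂; linarith
    have hzev : ∀ᶠ s in 𝓝[≥] t₂, z s ∈ Metric.ball (z t₂) r := by
      have : Tendsto z (𝓝[≥] t₂) (𝓝 (z t₂)) :=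
        ((hzcont t₂ ht₂0).mono (Ici_subset_Ici.mpr ht₂0)).tendsto
      exact this (Metric.ball_mem_nhds _ hr)
    have hgev : ∀ᶠ s in 𝓝[≥] t₂, g s ∈ Metric.ball (z t₂) r := by
      have : Tendsto g (𝓝[≥] t₂) (𝓝 (z t₂)) := by
        rw [← hgz]
        exact ((hg t₂).continuousAt.continuousWithinAt).tendsto
      exact this (Metric.ball_mem_nhds _ hr)
    obtain ⟨b, hb, hIcc⟩ := mem_nhdsGE_iff_exists_Icc_subset.1 (hzev.and hgev)
    set b' := min b t₁ with hb'def
    have hb'1 : t₂ < b' := lt_min hb ht₂lt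
    have hb'2 : b' ≤ t₁ := min_le_right _ _
    have hmem : ∀ s, s ∈ Icc t₂ b' → z s ∈ U ∧ g s ∈ U := by
      intro s hs
      have : s ∈ Icc t₂ b := ⟨hs.1, le_trans hs.2 (min_le_left _ _)⟩
      exact ⟨hball (hIcc this).1, hball (hIcc this).2⟩
    have hwnn : ∀ s, s ∈ Icc t₂ b' → 0 ≤ w s := by
      intro s hs
      rcases eq_or_lt_of_le hs.1 with hq | hq
      · rw [← hq, hw₂]
      · exact (hpos s hq (le_trans hs.2 hb'2)).le
    -- Grönwall
    have hgron := le_gronwallBound_of_liminf_deriv_right_le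
      (f := w) (f' := fun s => -γ (z s) - g' s) (δ := 0) (K := (K : ℝ)) (ε := 0)
      (a := t₂) (b := b')
      (hwcont.mono (fun u hu => le_trans ht₂0 hu.1))
      (by
        intro s hs rr hrr
        have hs0 : (0:ℝ) ≤ s := le_trans ht₂0 hs.1
        have hd : HasDerivWithinAt w (-γ (z s) - g' s) (Ici s) s := by
          have h1 : HasDerivWithinAt z (-γ (z s)) (Ici s) s :=
            (hz' s hs0).mono (Ici_subset_Ici.mpr hs0)
          exact h1.sub ((hg s).hasDerivWithinAt)
        have := hd.liminf_right_slope_le hrr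
        refine this.mono fun u hu => ?_
        simpa [slope_def_field, div_eq_inv_mul] using hu
      )
      (by rw [hw₂])
      (by
        intro s hs
        have hs0 : (0:ℝ) ≤ s := le_trans ht₂0 hs.1
        have hsmem : s ∈ Icc t₂ b' := ⟨hs.1, hs.2.le⟩
        obtain ⟨hzU, hgU⟩ := hmem s hsmem
        have hdist : dist (γ (g s)) (γ (z s)) ≤ (K : ℝ) * dist (g s) (z s) :=
          hKU.dist_le_mul _ hgU _ hzU
        have hws : 0 ≤ w s := hwnn s hsmem
        have h1 : γ (g s) - γ (z s) ≤ (K : ℝ) * (z s - g s) := by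
          have h2 : γ (g s) - γ (z s) ≤ dist (γ (g s)) (γ (z s)) := by
            rw [Real.dist_eq]; exact le_abs_self _
          have h3 : dist (g s) (z s) = z s - g s := by
            rw [Real.dist_eq, abs_sub_comm, abs_of_nonneg (by simpa [w] using hws)]
          rw [h3] at hdist
          linarith
        have h4 := hbound s hs0
        simp only [w]
        nlinarith
      )
    have := hgron b' ⟨hb'1.le, le_rfl⟩
    rw [gronwallBound_ε0_δ0] at this
    exact absurd this (not_le.mpr (hpos b' hb'1 hb'2))
  · -- liminf part
    have key : ∀ ε : ℝ, 0 < ε → ∀ᶠ t in atTop, -ε ≤ g t := by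
      intro ε hε
      set δ := -γ (-ε) with hδdef
      have hδ : 0 < δ := by
        have : γ (-ε) < γ 0 := hMono (by linarith)
        rw [hγ0] at this; simp only [δ]; linarith
      have hg'big : ∀ s, 0 ≤ s → g s ≤ -ε → δ ≤ g' s := by
        intro s hs hgs
        have h1 : γ (g s) ≤ γ (-ε) := hMono.monotone hgs
        have h2 := hbound s hs
        simp only [δ]; linarith
      -- Step A: reach -ε
      have stepA : ∃ t₀, 0 ≤ t₀ ∧ -ε ≤ g t₀ := by
        by_contra hA
        push_neg at hA
        set T := max 0 ((-ε - g 0) / δ) with hT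
        have hT0 : 0 ≤ T := le_max_left _ _
        have hgrow := grow_aux hg hT0 (fun s hs => hg'big s hs.1 (hA s hs.1).le)
        have hTδ : -ε - g 0 ≤ δ * T := by
          have h1 : (-ε - g 0) / δ ≤ T := le_max_right _ _
          calc -ε - g 0 = δ * ((-ε - g 0) / δ) := by field_simp
            _ ≤ δ * T := by exact mul_le_mul_of_nonneg_left h1 hδ.le
        have := hA T hT0
        simp only [sub_zero] at hgrow
        linarith
      obtain ⟨t₀, ht₀0, ht₀⟩ := stepA
      -- Step B: invariance
      have stepB : ∀ t, t₀ ≤ t → -ε ≤ g t := by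
        intro t₁ ht₁
        by_contra hB
        push_neg at hB
        set S : Set ℝ := Icc t₀ t₁ ∩ g ⁻¹' (Ici (-ε)) with hSdef
        have hgc : Continuous g := by
          have : ∀ s : ℝ, ContinuousAt g s := fun s => (hg s).continuousAt
          exact continuous_iff_continuousAt.mpr this
        have hScl : IsClosed S := (isClosed_Icc).inter (isClosed_Ici.preimage hgc)
        have hScomp : IsCompact S :=
          isCompact_Icc.of_isClosed_subset hScl Set.inter_subset_left
        have hSne : S.Nonempty := ⟨t₀, ⟨le_rfl, ht₁⟩, ht₀⟩
        obtain ⟨t₂, ht₂def⟩ : ∃ t₂ : ℝ, t₂ = sSup S := ⟨_, rfl⟩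
        have ht₂S : t₂ ∈ S := ht₂def ▸ hScomp.sSup_mem hSne
        have ht₂0 : t₀ ≤ t₂ := ht₂S.1.1
        have ht₂le : t₂ ≤ t₁ := ht₂S.1.2
        have ht₂g : -ε ≤ g t₂ := ht₂S.2
        have ht₂lt : t₂ < t₁ := lt_of_le_of_ne ht₂le (by rintro rfl; linarith)
        have hlt : ∀ s, t₂ < s → s ≤ t₁ → g s < -ε := by
          intro s hs1 hs2
          by_contra hle
          push_neg at hle
          have : s ∈ S := ⟨⟨le_trans ht₂0 hs1.le, hs2⟩, hle⟩
          exact absurd (ht₂def ▸ le_csSup hScomp.bddAbove this) (not_le.mpr hs1)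
        have hg₂ : g t₂ ≤ -ε := by
          have hne : (𝓝[>] t₂).NeBot := nhdsGT_neBot t₂
          have htend : Tendsto g (𝓝[>] t₂) (𝓝 (g t₂)) :=
            (hgc.continuousAt (x := t₂)).continuousWithinAt.tendsto
          refine le_of_tendsto htend ?_
          filter_upwards [Ioc_mem_nhdsGT ht₂lt] with s hs
          exact (hlt s hs.1 hs.2).le
        have hder : ∀ s, s ∈ Icc t₂ t₁ → δ ≤ g' s := by
          intro s hs
          rcases eq_or_lt_of_le hs.1 with hq | hq
          · exact hg'big s (le_trans ht₀0 (hq ▸ ht₂0)) (hq ▸ hg₂)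
          · exact hg'big s (le_trans (le_trans ht₀0 ht₂0) hq.le) (hlt s hq hs.2).le
        have hgrow := grow_aux hg ht₂le hder
        have : 0 < δ * (t₁ - t₂) := mul_pos hδ (by linarith)
        linarith [hB, ht₂g, hgrow]
      exact eventually_atTop.mpr ⟨t₀, stepB⟩
    by_cases hc : IsCoboundedUnder (· ≥ ·) atTop g
    · have hliminf : ∀ ε : ℝ, 0 < ε → -ε ≤ liminf g atTop := fun ε hε =>
        le_liminf_of_le hc (key ε hε)
      by_contra hL
      push_neg at hL
      have := hliminf (-(liminf g atTop) / 2) (by linarith)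
      linarith
    · have hnb : ¬ BddAbove {a : ℝ | ∀ᶠ n in atTop, a ≤ g n} := by
        intro hbdd
        obtain ⟨b, hb⟩ := hbdd
        refine hc ⟨b, fun a ha => ?_⟩
        exact hb (by simpa [eventually_map] using ha)
      have : liminf g atTop = 0 := by
        rw [liminf_eq]
        exact Real.sSup_of_not_bddAbove hnb
      rw [this]
end

section
/- Let I be a finite nonempty index set of agents with continuously differentiable trajectories xᵢ : [0,∞) → ℝᵈ, and let (Nᵢ)_{i∈I} be neighbor sets satisfying i ∉ Nᵢ and the symmetry j ∈ Nᵢ ⟺ i ∈ Nⱼ. For each pair with j ∈ Nᵢ let J_{ij} : (0,∞) → [0,∞) be continuously differentiable with J_{ij} = J_{ji}. Define Jᵢ(x) = ∑_{j∈Nᵢ} J_{ij}(‖xᵢ − xⱼ‖) and J(x) = ∑_{i∈I} Jᵢ(x). Assume xᵢ(t) ≠ xⱼ(t) for all t ≥ 0 and all j ∈ Nᵢ, let α : [0,a) → ℝ be a locally Lipschitz subadditive class K function, and assume J(x(0)) < a. If for every i ∈ I and every t ≥ 0, ∇_{xᵢ}Jᵢ(x(t))·ẋᵢ(t) ≤ −α(Jᵢ(x(t))),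 then J(x(t)) → 0 as t → ∞. -/
/-- **Proposition A.1 (refinement of Proposition 8 of Notomista–Egerstedt).**
For symmetric pairwise costs `J_{ij}(‖xᵢ − xⱼ‖) = J_{ji}(‖xⱼ − xᵢ‖)` over an undirected
graph, with `Jᵢ(x) = ∑_{j∈Nᵢ} J_{ij}(‖xᵢ − xⱼ‖)` and `J = ∑ᵢ Jᵢ`, `J(x(0)) < a`, if each
agent enforces `∇_{xᵢ}Jᵢ(x(t))·ẋᵢ(t) ≤ −α(Jᵢ(x(t)))` for all `t ≥ 0`, where `α` is a locally
Lipschitz subadditive class `K` function on `[0, a)`, then `J(x(t)) → 0` as `t → ∞`. -/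
theorem constraint_driven_convergence {ι : Type*} [Fintype ι] [Nonempty ι] [DecidableEq ι]
    {d : ℕ} {N : ι → Finset ι} (hself : ∀ i, i ∉ N i)
    (hNsymm : ∀ i j, j ∈ N i ↔ i ∈ N j)
    {J : ι → ι → ℝ → ℝ}
    (hJC : ∀ i j, j ∈ N i → ContDiffOn ℝ 1 (J i j) (Set.Ioi 0))
    (hJnn : ∀ i j, j ∈ N i → ∀ s : ℝ, 0 < s → 0 ≤ J i j s)
    (hJsymm : ∀ i j, J i j = J j i)
    {x : ℝ → ι → EuclideanSpace ℝ (Fin d)} (hx : ContDiff ℝ 1 x)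
    (hsep : ∀ t : ℝ, 0 ≤ t → ∀ i, ∀ j ∈ N i, x t i ≠ x t j)
    {a : ℝ} (ha : 0 < a) {α : ℝ → ℝ}
    (hK : IsClassKOn a α) (hLip : LocallyLipschitzOn (Set.Ico 0 a) α)
    (hsub : SubadditiveOn a α)
    (hJ0 : (∑ k, ∑ j ∈ N k, J k j ‖x 0 k - x 0 j‖) < a)
    (hcon : ∀ i, ∀ t : ℝ, 0 ≤ t →
      fderiv ℝ (fun y : ι → EuclideanSpace ℝ (Fin d) =>
          ∑ j ∈ N i, J i j ‖y i - y j‖) (x t) (Pi.single i (deriv x t i)) ≤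
        -α (∑ j ∈ N i, J i j ‖x t i - x t j‖)) :
    Filter.Tendsto (fun t => ∑ k, ∑ j ∈ N k, J k j ‖x t k - x t j‖)
      Filter.atTop (nhds 0) := by
  classical
  obtain ⟨hαc, hαmono, hα0⟩ := hK
  have hαnn : ∀ r : ℝ, 0 ≤ r → r < a → 0 ≤ α r := by
    intro r h1 h2
    rcases eq_or_lt_of_le h1 with h | h
    · rw [← h, hα0]
    · have := hαmono ⟨le_rfl, ha⟩ ⟨h1, h2⟩ h
      linarith [hα0]
  set V : ℝ → ℝ := fun t => ∑ k, ∑ j ∈ N k, J k j ‖x t k - x t j‖ with hVdef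
  set c : ℝ → ι → ℝ := fun t m => ∑ j ∈ N m, J m j ‖x t m - x t j‖ with hcdef
  have hVc : ∀ t, V t = ∑ m, c t m := fun t => rfl
  have hcnn : ∀ t, 0 ≤ t → ∀ m, 0 ≤ c t m := by
    intro t ht m
    refine Finset.sum_nonneg fun j hj => hJnn m j hj _ ?_
    exact norm_pos_iff.mpr (sub_ne_zero.mpr (hsep t ht m j hj))
  have hVnn : ∀ t, 0 ≤ t → 0 ≤ V t := by
    intro t ht
    rw [hVc t]
    exact Finset.sum_nonneg fun m _ => hcnn t ht m
  have hV0 : V 0 < a := hJ0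
  -- differentiability of z ↦ J i j ‖z‖ away from 0
  have hg : ∀ i j, j ∈ N i → ∀ z : EuclideanSpace ℝ (Fin d), z ≠ 0 →
      DifferentiableAt ℝ (fun z : EuclideanSpace ℝ (Fin d) => J i j ‖z‖) z := by
    intro i j hij z hz
    have h1 : DifferentiableAt ℝ (fun z : EuclideanSpace ℝ (Fin d) => ‖z‖) z :=
      differentiableAt_id.norm ℝ hz
    have h2 : DifferentiableAt ℝ (J i j) ‖z‖ :=
      ((hJC i j hij).contDiffAt ((isOpen_Ioi).mem_nhds (norm_pos_iff.mpr hz))).differentiableAt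
        one_ne_zero
    exact h2.comp z h1
  set pr : ι → ((ι → EuclideanSpace ℝ (Fin d)) →L[ℝ] EuclideanSpace ℝ (Fin d)) :=
    fun i => ContinuousLinearMap.proj i with hpr
  set Dφ : ι → ι → (ι → EuclideanSpace ℝ (Fin d)) →
      ((ι → EuclideanSpace ℝ (Fin d)) →L[ℝ] ℝ) := fun i j p =>
    (fderiv ℝ (fun z : EuclideanSpace ℝ (Fin d) => J i j ‖z‖) (p i - p j)).comp
      (pr i - pr j) with hDφ
  have hφ : ∀ i j, j ∈ N i → ∀ p : ι → EuclideanSpace ℝ (Fin d), p i ≠ p j →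
      HasFDerivAt (fun y : ι → EuclideanSpace ℝ (Fin d) => J i j ‖y i - y j‖) (Dφ i j p) p := by
    intro i j hij p hp
    have h2 : HasFDerivAt (fun y : ι → EuclideanSpace ℝ (Fin d) => y i - y j)
        (pr i - pr j) p := (pr i).hasFDerivAt.sub (pr j).hasFDerivAt
    have h1 := (hg i j hij (p i - p j) (sub_ne_zero.mpr hp)).hasFDerivAt
    exact h1.comp p h2
  have hvan : ∀ i j (p : ι → EuclideanSpace ℝ (Fin d)) m (w : EuclideanSpace ℝ (Fin d)),
      m ≠ i → m ≠ j → Dφ i j p (Pi.single m w) = 0 := by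
    intro i j p m w hmi hmj
    have h0 : (pr i - pr j) (Pi.single m w) = 0 := by
      simp [hpr, ContinuousLinearMap.sub_apply, ContinuousLinearMap.proj_apply,
        Pi.single_eq_of_ne (Ne.symm hmi), Pi.single_eq_of_ne (Ne.symm hmj)]
    simp only [hDφ, ContinuousLinearMap.comp_apply, h0, map_zero]
  have hDsymm : ∀ i j, j ∈ N i → ∀ p : ι → EuclideanSpace ℝ (Fin d), p i ≠ p j →
      Dφ i j p = Dφ j i p := by
    intro i j hij p hp
    have e : (fun y : ι → EuclideanSpace ℝ (Fin d) => J j i ‖y j - y i‖)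
        = fun y : ι → EuclideanSpace ℝ (Fin d) => J i j ‖y i - y j‖ := by
      funext y; rw [hJsymm i j, norm_sub_rev]
    have h2 := hφ j i ((hNsymm i j).mp hij) p (Ne.symm hp)
    rw [e] at h2
    exact (hφ i j hij p hp).unique h2
  -- key combinatorial identity
  have hkey : ∀ (p : ι → EuclideanSpace ℝ (Fin d)), (∀ i, ∀ j ∈ N i, p i ≠ p j) →
      ∀ m (w : EuclideanSpace ℝ (Fin d)),
      (∑ k, ∑ j ∈ N k, Dφ k j p) (Pi.single m w)
        = 2 * ((∑ j ∈ N m, Dφ m j p) (Pi.single m w)) := by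
    intro p hp m w
    simp only [ContinuousLinearMap.sum_apply]
    rw [← Finset.add_sum_erase Finset.univ
      (fun k => ∑ j ∈ N k, Dφ k j p (Pi.single m w)) (Finset.mem_univ m)]
    have e : ∀ k ∈ Finset.univ.erase m, (∑ j ∈ N k, Dφ k j p (Pi.single m w))
        = if k ∈ N m then Dφ m k p (Pi.single m w) else 0 := by
      intro k hk
      have hkm : k ≠ m := Finset.ne_of_mem_erase hk
      by_cases h : k ∈ N m
      · rw [if_pos h]
        have hmk : m ∈ N k := (hNsymm m k).mp h
        rw [Finset.sum_eq_single_of_mem m hmk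
          (fun j _ hjm => hvan k j p m w hkm.symm (Ne.symm hjm))]
        rw [hDsymm k m hmk p (hp k m hmk)]
      · rw [if_neg h]
        refine Finset.sum_eq_zero fun j hj => hvan k j p m w hkm.symm fun hmj => h ?_
        exact (hNsymm k m).mp (hmj ▸ hj)
    rw [Finset.sum_congr rfl e, Finset.sum_ite_mem]
    have hNm : Finset.univ.erase m ∩ N m = N m :=
      Finset.inter_eq_right.mpr fun k hk =>
        Finset.mem_erase.mpr ⟨fun h => hself m (h ▸ hk), Finset.mem_univ k⟩
    rw [hNm, two_mul]
  have hFm : ∀ m (t : ℝ), 0 ≤ t → HasFDerivAt (fun y : ι → EuclideanSpace ℝ (Fin d) =>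
      ∑ j ∈ N m, J m j ‖y m - y j‖) (∑ j ∈ N m, Dφ m j (x t)) (x t) :=
    fun m t ht => HasFDerivAt.fun_sum fun j hj => hφ m j hj (x t) (hsep t ht m j hj)
  -- main derivative lemma
  have hVd : ∀ t : ℝ, 0 ≤ t → ∃ v', HasDerivAt V v' t ∧ (V t < a → v' ≤ -(2 * α (V t))) := by
    intro t ht
    have hxd : HasDerivAt x (deriv x t) t := (hx.differentiable one_ne_zero t).hasDerivAt
    have hF : HasFDerivAt (fun y : ι → EuclideanSpace ℝ (Fin d) =>
        ∑ k, ∑ j ∈ N k, J k j ‖y k - y j‖) (∑ k, ∑ j ∈ N k, Dφ k j (x t)) (x t) :=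
      HasFDerivAt.fun_sum fun k _ => HasFDerivAt.fun_sum fun j hj => hφ k j hj (x t) (hsep t ht k j hj)
    have hVder : HasDerivAt V ((∑ k, ∑ j ∈ N k, Dφ k j (x t)) (deriv x t)) t :=
      hF.comp_hasDerivAt t hxd
    refine ⟨_, hVder, fun hVa => ?_⟩
    have hsplit : (∑ k, ∑ j ∈ N k, Dφ k j (x t)) (deriv x t)
        = ∑ m, (∑ k, ∑ j ∈ N k, Dφ k j (x t)) (Pi.single m (deriv x t m)) := by
      conv_lhs => rw [← Finset.univ_sum_single (deriv x t)]
      rw [map_sum]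
    have hcin : ∀ m, c t m < a := by
      intro m
      refine lt_of_le_of_lt ?_ hVa
      rw [hVc t]
      exact Finset.single_le_sum (fun m _ => hcnn t ht m) (Finset.mem_univ m)
    have hterm : ∀ m, (∑ k, ∑ j ∈ N k, Dφ k j (x t)) (Pi.single m (deriv x t m))
        ≤ -(2 * α (c t m)) := by
      intro m
      have hk := hkey (x t) (fun i j hj => hsep t ht i j hj) m (deriv x t m)
      have hcon' := hcon m t ht
      rw [(hFm m t ht).fderiv] at hcon'
      have : ((∑ j ∈ N m, Dφ m j (x t)) : (ι → EuclideanSpace ℝ (Fin d)) →L[ℝ] ℝ)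
          (Pi.single m (deriv x t m)) ≤ -α (c t m) := hcon'
      rw [hk]; linarith
    have hsum_le : ∀ s : Finset ι, ∑ m ∈ s, c t m ≤ V t := by
      intro s
      rw [hVc t]
      exact Finset.sum_le_sum_of_subset_of_nonneg (Finset.subset_univ s)
        (fun m _ _ => hcnn t ht m)
    have hαsum : ∀ s : Finset ι, α (∑ m ∈ s, c t m) ≤ ∑ m ∈ s, α (c t m) := by
      intro s
      induction s using Finset.induction_on with
      | empty => simp [hα0]
      | @insert i s hns ih =>
        rw [Finset.sum_insert hns, Finset.sum_insert hns]
        have h1 : c t i ∈ Set.Ico 0 a := ⟨hcnn t ht i, hcin i⟩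
        have h2 : (∑ m ∈ s, c t m) ∈ Set.Ico 0 a :=
          ⟨Finset.sum_nonneg fun m _ => hcnn t ht m, lt_of_le_of_lt (hsum_le s) hVa⟩
        have h3 : (c t i + ∑ m ∈ s, c t m) ∈ Set.Ico 0 a := by
          constructor
          · exact add_nonneg h1.1 h2.1
          · calc c t i + ∑ m ∈ s, c t m = ∑ m ∈ insert i s, c t m := (Finset.sum_insert hns).symm
              _ ≤ V t := hsum_le _
              _ < a := hVa
        have := hsub (c t i) (∑ m ∈ s, c t m) h1 h2 h3
        linarith
    have hαV : α (V t) ≤ ∑ m, α (c t m) := by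
      have := hαsum Finset.univ
      rwa [← hVc t] at this
    have hαVnn : 0 ≤ α (V t) := hαnn (V t) (hVnn t ht) hVa
    calc (∑ k, ∑ j ∈ N k, Dφ k j (x t)) (deriv x t)
        = ∑ m, (∑ k, ∑ j ∈ N k, Dφ k j (x t)) (Pi.single m (deriv x t m)) := hsplit
      _ ≤ ∑ m, -(2 * α (c t m)) := Finset.sum_le_sum fun m _ => hterm m
      _ = -(2 * ∑ m, α (c t m)) := by rw [Finset.mul_sum]; simp
      _ ≤ -(2 * α (V t)) := by linarith
  -- continuity
  have hVcont : ContinuousOn V (Set.Ici 0) := by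
    intro t ht
    obtain ⟨v', hv', -⟩ := hVd t ht
    exact hv'.continuousAt.continuousWithinAt
  -- V stays below a
  have hVlt : ∀ t : ℝ, 0 ≤ t → V t < a := by
    by_contra hcontra
    push_neg at hcontra
    obtain ⟨t₀, ht₀, ha₀⟩ := hcontra
    have hBc : IsClosed {t : ℝ | t ∈ Set.Ici (0:ℝ) ∧ a ≤ V t} := by
      have := hVcont.preimage_isClosed_of_isClosed isClosed_Ici (isClosed_Ici (a := a))
      convert this using 1
      rfl
    have hBne : Set.Nonempty {t : ℝ | t ∈ Set.Ici (0:ℝ) ∧ a ≤ V t} := ⟨t₀, ht₀, ha₀⟩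
    have hBbd : BddBelow {t : ℝ | t ∈ Set.Ici (0:ℝ) ∧ a ≤ V t} := ⟨0, fun t htB => htB.1⟩
    have hTB : sInf {t : ℝ | t ∈ Set.Ici (0:ℝ) ∧ a ≤ V t}
        ∈ {t : ℝ | t ∈ Set.Ici (0:ℝ) ∧ a ≤ V t} := hBc.csInf_mem hBne hBbd
    set T := sInf {t : ℝ | t ∈ Set.Ici (0:ℝ) ∧ a ≤ V t} with hT
    have hT0 : (0:ℝ) ≤ T := hTB.1
    have hlt : ∀ s, 0 ≤ s → s < T → V s < a := by
      intro s hs hsT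
      by_contra hVs
      push_neg at hVs
      exact absurd (csInf_le hBbd ⟨hs, hVs⟩) (not_le.mpr hsT)
    have hanti : AntitoneOn V (Set.Icc 0 T) := by
      apply antitoneOn_of_deriv_nonpos (convex_Icc 0 T)
        (hVcont.mono Set.Icc_subset_Ici_self)
      · intro s hs
        rw [interior_Icc] at hs
        exact ((hVd s hs.1.le).choose_spec.1.differentiableAt).differentiableWithinAt
      · intro s hs
        rw [interior_Icc] at hs
        obtain ⟨v', hv', hb⟩ := hVd s hs.1.le
        rw [hv'.deriv]
        have hVsa := hlt s hs.1.le hs.2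
        have h2 := hαnn (V s) (hVnn s hs.1.le) hVsa
        linarith [hb hVsa]
    have : V T ≤ V 0 := hanti ⟨le_rfl, hT0⟩ ⟨hT0, le_rfl⟩ hT0
    linarith [hTB.2]
  -- V antitone on [0, ∞)
  have hmono : AntitoneOn V (Set.Ici 0) := by
    apply antitoneOn_of_deriv_nonpos (convex_Ici 0) hVcont
    · intro s hs
      rw [interior_Ici] at hs
      exact ((hVd s hs.le).choose_spec.1.differentiableAt).differentiableWithinAt
    · intro s hs
      rw [interior_Ici] at hs
      obtain ⟨v', hv', hb⟩ := hVd s hs.le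
      rw [hv'.deriv]
      have h1 := hVlt s hs.le
      have h2 := hαnn (V s) (hVnn s hs.le) h1
      linarith [hb h1]
  -- the infimum limit
  have himg : (V '' Set.Ici 0).Nonempty := ⟨V 0, 0, Set.self_mem_Ici, rfl⟩
  have hbdd : BddBelow (V '' Set.Ici 0) := by
    refine ⟨0, ?_⟩
    rintro y ⟨t, ht, rfl⟩
    exact hVnn t ht
  set L := sInf (V '' Set.Ici 0) with hL
  have hL0 : 0 ≤ L := by
    refine le_csInf himg ?_
    rintro y ⟨t, ht, rfl⟩
    exact hVnn t ht
  have hLV : ∀ t, 0 ≤ t → L ≤ V t := fun t ht => csInf_le hbdd ⟨t, ht, rfl⟩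
  have hLa : L < a := lt_of_le_of_lt (hLV 0 le_rfl) hV0
  have hLz : L = 0 := by
    by_contra hne
    have hLpos : 0 < L := lt_of_le_of_ne hL0 (Ne.symm hne)
    have hαL : 0 < α L := by
      have := hαmono ⟨le_rfl, ha⟩ ⟨hL0, hLa⟩ hLpos
      rwa [hα0] at this
    have hWanti : AntitoneOn (fun t => V t + α L * t) (Set.Ici 0) := by
      apply antitoneOn_of_deriv_nonpos (convex_Ici 0)
      · refine ContinuousOn.add hVcont ?_
        exact (continuous_const.mul continuous_id).continuousOn
      · intro s hs
        rw [interior_Ici] at hs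
        obtain ⟨v', hv', -⟩ := hVd s hs.le
        have : HasDerivAt (fun t => V t + α L * t) (v' + α L) s := by
          have h := hv'.add ((hasDerivAt_id s).const_mul (α L))
          simp only [mul_one] at h
          exact h
        exact this.differentiableAt.differentiableWithinAt
      · intro s hs
        rw [interior_Ici] at hs
        obtain ⟨v', hv', hb⟩ := hVd s hs.le
        have hd : HasDerivAt (fun t => V t + α L * t) (v' + α L) s := by
          have h := hv'.add ((hasDerivAt_id s).const_mul (α L))
          simp only [mul_one] at h
          exact h
        rw [hd.deriv]
        have h1 := hVlt s hs.le
        have h2 : α L ≤ α (V s) :=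
          hαmono.monotoneOn ⟨hL0, hLa⟩ ⟨hVnn s hs.le, h1⟩ (hLV s hs.le)
        linarith [hb h1]
    have hV00 : 0 ≤ V 0 := hVnn 0 le_rfl
    set t₁ : ℝ := V 0 / α L + 1 with ht₁def
    have ht₁ : 0 ≤ t₁ := by positivity
    have hW : V t₁ + α L * t₁ ≤ V 0 + α L * 0 :=
      hWanti Set.self_mem_Ici ht₁ ht₁
    have h1 : α L * t₁ = V 0 + α L := by
      rw [ht₁def]
      field_simp
    nlinarith [hVnn t₁ ht₁]
  -- conclusion
  show Filter.Tendsto V Filter.atTop (nhds 0)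
  rw [← hLz]
  refine Metric.tendsto_atTop.mpr fun ε hε => ?_
  have hlt : sInf (V '' Set.Ici 0) < L + ε := by rw [← hL]; linarith
  obtain ⟨y, hy_mem, hylt⟩ := exists_lt_of_csInf_lt himg hlt
  obtain ⟨t₀, ht₀, rfl⟩ := hy_mem
  refine ⟨t₀, fun t hta => ?_⟩
  have ht : (0:ℝ) ≤ t := le_trans ht₀ hta
  have h1 : V t ≤ V t₀ := hmono ht₀ ht hta
  have h2 : L ≤ V t := hLV t ht
  rw [Real.dist_eq, abs_lt]
  constructor <;> linarith
end

section
/- Let I be a finite nonempty index set, and for each i ∈ I let xᵢ : [0,∞) → ℝ^{nᵢ} be a continuously differentiable curve; write x(t) for the tuple (xᵢ(t))_{i∈I}. For each i ∈ I let Jᵢ : (∏_{i∈I} ℝ^{nᵢ}) × [0,∞) → [0,∞) be continuously differentiable, set J = ∑_{i∈I} Jᵢ, and assume J(x(0),0) < a. Let α : [0,a) → ℝ be a locally Lipschitz subadditive class K function. Assume the gradient-alignment condition ∇_{xᵢ}J(x,t) = ∇_{xᵢ}Jᵢ(x,t) for all i ∈ I, all x, and all t ≥ 0. If for every i ∈ I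 and every t ≥ 0, ∇_{xᵢ}Jᵢ(x(t),t)·ẋᵢ(t) + ∂Jᵢ/∂t(x(t),t) + α(Jᵢ(x(t),t)) ≤ 0, then d/dt J(x(t),t) ≤ −α(J(x(t),t)) for all t ≥ 0 and J(x(t),t) → 0 as t → ∞. -/
/-- **The final Remark of Appendix A (equation (44)).** With `J = ∑ᵢ Jᵢ`, `J(x(0),0) < a`,
`α` a locally Lipschitz subadditive class `K` function on `[0, a)`, and the gradient-alignment
condition `∇_{xᵢ}J(x,t) = ∇_{xᵢ}Jᵢ(x,t)` for all `i`, `x`, `t ≥ 0`, if each agent enforces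
`∇_{xᵢ}Jᵢ(x(t),t)·ẋᵢ(t) + ∂Jᵢ/∂t(x(t),t) + α(Jᵢ(x(t),t)) ≤ 0` for all `t ≥ 0`, then
`d/dt J(x(t),t) ≤ −α(J(x(t),t))` for all `t ≥ 0` and `J(x(t),t) → 0` as `t → ∞`. -/
theorem santos_special_case {ι : Type*} [Fintype ι] [Nonempty ι] [DecidableEq ι]
    {n : ι → ℕ} {a : ℝ} (ha : 0 < a) {α : ℝ → ℝ}
    (hK : IsClassKOn a α) (hLip : LocallyLipschitzOn (Set.Ico 0 a) α)
    (hsub : SubadditiveOn a α)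
    {x : ℝ → ∀ i, EuclideanSpace ℝ (Fin (n i))} (hx : ContDiff ℝ 1 x)
    {J : ι → ((∀ i, EuclideanSpace ℝ (Fin (n i))) × ℝ) → ℝ}
    (hJ : ∀ i, ContDiff ℝ 1 (J i)) (hJnn : ∀ i p, 0 ≤ J i p)
    (hJ0 : (∑ i, J i (x 0, 0)) < a)
    (halign : ∀ i, ∀ y : ∀ i, EuclideanSpace ℝ (Fin (n i)), ∀ t : ℝ, 0 ≤ t →
      ∀ v : EuclideanSpace ℝ (Fin (n i)),
        fderiv ℝ (fun p => ∑ j, J j p) (y, t) (Pi.single i v, (0:ℝ)) =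
          fderiv ℝ (J i) (y, t) (Pi.single i v, (0:ℝ)))
    (hcon : ∀ i, ∀ t : ℝ, 0 ≤ t →
      fderiv ℝ (J i) (x t, t) (Pi.single i (deriv x t i), (0:ℝ)) +
        fderiv ℝ (J i) (x t, t) (0, 1) + α (J i (x t, t)) ≤ 0) :
    (∀ t : ℝ, 0 ≤ t →
      deriv (fun s => ∑ j, J j (x s, s)) t ≤ -α (∑ j, J j (x t, t))) ∧
    Filter.Tendsto (fun t => ∑ j, J j (x t, t)) Filter.atTop (nhds 0) := by
  classical
  obtain ⟨hαc, hαm, hα0⟩ := hK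
  set V : ℝ → ℝ := fun s => ∑ j, J j (x s, s) with hVdef
  -- smoothness
  have hφ : ContDiff ℝ 1 (fun s : ℝ => ((x s, s) : (∀ i, EuclideanSpace ℝ (Fin (n i))) × ℝ)) :=
    hx.prodMk contDiff_id
  have hV : ContDiff ℝ 1 V := ContDiff.sum fun j _ => (hJ j).comp hφ
  have hVd : Differentiable ℝ V := hV.differentiable one_ne_zero
  have hVc : Continuous V := hVd.continuous
  have hVnn : ∀ t, 0 ≤ V t := fun t => Finset.sum_nonneg fun j _ => hJnn j _
  have hV0a : V 0 < a := hJ0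
  -- α is nonnegative on [0, a)
  have hαnn : ∀ s, s ∈ Set.Ico (0:ℝ) a → 0 ≤ α s := by
    intro s hs
    rcases eq_or_lt_of_le hs.1 with h | h
    · rw [← h, hα0]
    · have := hαm ⟨le_rfl, ha⟩ hs h
      rw [hα0] at this; exact this.le
  -- subadditivity over finsets
  have hsubsum : ∀ (f : ι → ℝ), (∀ i, 0 ≤ f i) → (∑ i, f i) < a →
      ∀ s : Finset ι, α (∑ i ∈ s, f i) ≤ ∑ i ∈ s, α (f i) := by
    intro f hf hfa s
    have hkey : ∀ s : Finset ι, ∑ i ∈ s, f i ≤ ∑ i, f i := fun s =>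
      Finset.sum_le_sum_of_subset_of_nonneg (Finset.subset_univ s) (fun i _ _ => hf i)
    induction s using Finset.induction_on with
    | empty => simp [hα0]
    | @insert i s his ih =>
      rw [Finset.sum_insert his, Finset.sum_insert his]
      have h1 : f i ∈ Set.Ico (0:ℝ) a := by
        refine ⟨hf i, lt_of_le_of_lt ?_ hfa⟩
        simpa using hkey {i}
      have h2 : (∑ j ∈ s, f j) ∈ Set.Ico (0:ℝ) a :=
        ⟨Finset.sum_nonneg fun j _ => hf j, lt_of_le_of_lt (hkey s) hfa⟩
      have h3 : f i + ∑ j ∈ s, f j ∈ Set.Ico (0:ℝ) a := by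
        refine ⟨add_nonneg (hf i) h2.1, ?_⟩
        have := hkey (insert i s)
        rw [Finset.sum_insert his] at this
        exact lt_of_le_of_lt this hfa
      have := hsub _ _ h1 h2 h3
      linarith
  -- derivative of V
  have hxd : ∀ t : ℝ, HasDerivAt (fun s : ℝ =>
      ((x s, s) : (∀ i, EuclideanSpace ℝ (Fin (n i))) × ℝ)) (deriv x t, 1) t := fun t =>
    ((ContDiff.differentiable hx one_ne_zero).differentiableAt.hasDerivAt).prodMk (hasDerivAt_id t)
  have hDV : ∀ t : ℝ, HasDerivAt V (∑ j, fderiv ℝ (J j) (x t, t) (deriv x t, 1)) t := by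
    intro t
    refine HasDerivAt.fun_sum fun j _ => ?_
    have hc := HasFDerivAt.comp_hasDerivAt (l := J j) (f := fun s : ℝ => ((x s, s) :
        (∀ i, EuclideanSpace ℝ (Fin (n i))) × ℝ)) t
      (((hJ j).differentiable one_ne_zero (x t, t)).hasFDerivAt) (hxd t)
    simpa [Function.comp_def] using hc
  -- key derivative bound while V t < a
  have keyA : ∀ t : ℝ, 0 ≤ t → V t < a → deriv V t ≤ -α (V t) := by
    intro t ht hta
    have hsum_d : ∀ j : ι, DifferentiableAt ℝ (J j) (x t, t) := fun j =>
      ((hJ j).differentiable one_ne_zero).differentiableAt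
    have hdsum : fderiv ℝ (fun p => ∑ j, J j p) (x t, t) = ∑ j, fderiv ℝ (J j) (x t, t) :=
      fderiv_fun_sum (fun j _ => hsum_d j)
    have hDval : deriv V t =
        fderiv ℝ (fun p => ∑ j, J j p) (x t, t) (deriv x t, 1) := by
      rw [(hDV t).deriv, hdsum]
      simp
    have hsplit : ((deriv x t, (1:ℝ)) : (∀ i, EuclideanSpace ℝ (Fin (n i))) × ℝ) =
        (∑ i, ((Pi.single i (deriv x t i) : ∀ i, EuclideanSpace ℝ (Fin (n i))), (0:ℝ)))
          + ((0 : ∀ i, EuclideanSpace ℝ (Fin (n i))), (1:ℝ)) := by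
      have h1 : (∑ i, ((Pi.single i (deriv x t i) : ∀ i, EuclideanSpace ℝ (Fin (n i))), (0:ℝ)))
          = ((∑ i, Pi.single i (deriv x t i) : ∀ i, EuclideanSpace ℝ (Fin (n i))), (0:ℝ)) := by
        rw [Prod.ext_iff]
        constructor
        · rw [Prod.fst_sum]
        · rw [Prod.snd_sum]; simp
      rw [h1, Finset.univ_sum_single]
      simp [Prod.mk_add_mk]
    have hmain : fderiv ℝ (fun p => ∑ j, J j p) (x t, t) (deriv x t, 1) =
        ∑ i, (fderiv ℝ (J i) (x t, t) (Pi.single i (deriv x t i), (0:ℝ))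
          + fderiv ℝ (J i) (x t, t) (0, 1)) := by
      rw [hsplit, map_add, map_sum, Finset.sum_add_distrib]
      congr 1
      · exact Finset.sum_congr rfl fun i _ => halign i (x t) t ht (deriv x t i)
      · rw [hdsum]; simp
    rw [hDval, hmain]
    calc ∑ i, (fderiv ℝ (J i) (x t, t) (Pi.single i (deriv x t i), (0:ℝ))
          + fderiv ℝ (J i) (x t, t) (0, 1))
        ≤ ∑ i, -α (J i (x t, t)) :=
          Finset.sum_le_sum fun i _ => by linarith [hcon i t ht]
      _ = -∑ i, α (J i (x t, t)) := by rw [← Finset.sum_neg_distrib]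
      _ ≤ -α (∑ i, J i (x t, t)) := by
          have := hsubsum (fun i => J i (x t, t)) (fun i => hJnn i _) hta Finset.univ
          linarith
  -- invariance: V t ≤ V 0 for t ≥ 0
  have bound : ∀ t : ℝ, 0 ≤ t → V t ≤ V 0 := by
    by_contra h
    push_neg at h
    obtain ⟨t₁, ht₁, hV1⟩ := h
    set c := min ((V 0 + a)/2) ((V 0 + V t₁)/2) with hc
    have hc1 : V 0 < c := lt_min (by linarith) (by linarith)
    have hc2 : c < a := lt_of_le_of_lt (min_le_left _ _) (by linarith)
    have hc3 : c < V t₁ := lt_of_le_of_lt (min_le_right _ _) (by linarith)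
    set S := Set.Icc 0 t₁ ∩ {s : ℝ | c ≤ V s} with hS
    have hSne : t₁ ∈ S := ⟨⟨ht₁, le_rfl⟩, hc3.le⟩
    have hSclosed : IsClosed S := isClosed_Icc.inter (isClosed_Ici.preimage hVc)
    have hSbdd : BddBelow S := ⟨0, fun s hs => hs.1.1⟩
    have huS : sInf S ∈ S := hSclosed.csInf_mem ⟨t₁, hSne⟩ hSbdd
    set u := sInf S with hu
    have hu0 : 0 < u := by
      rcases huS.1.1.lt_or_eq with h' | h'
      · exact h'
      · exfalso
        have := huS.2
        rw [← h'] at this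
        simp only [Set.mem_setOf_eq] at this
        linarith
    have hlt : ∀ s, 0 ≤ s → s < u → V s < c := by
      intro s hs hsu
      by_contra hcon2
      push_neg at hcon2
      have hsS : s ∈ S := ⟨⟨hs, hsu.le.trans huS.1.2⟩, hcon2⟩
      exact absurd (csInf_le hSbdd hsS) (not_le.mpr hsu)
    have hanti : AntitoneOn V (Set.Icc 0 u) := by
      refine antitoneOn_of_deriv_nonpos (convex_Icc 0 u) hVc.continuousOn
        (hVd.differentiableOn) ?_
      intro s hs
      rw [interior_Icc] at hs
      have hVs : V s < a := lt_trans (hlt s hs.1.le hs.2) hc2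
      have h1 := keyA s hs.1.le hVs
      have h2 : 0 ≤ α (V s) := hαnn _ ⟨hVnn s, hVs⟩
      linarith
    have hVu : V u ≤ V 0 := hanti ⟨le_rfl, hu0.le⟩ ⟨hu0.le, le_rfl⟩ hu0.le
    have := huS.2
    simp only [Set.mem_setOf_eq] at this
    linarith
  have hVa : ∀ t : ℝ, 0 ≤ t → V t < a := fun t ht => lt_of_le_of_lt (bound t ht) hV0a
  have key : ∀ t : ℝ, 0 ≤ t → deriv V t ≤ -α (V t) := fun t ht => keyA t ht (hVa t ht)
  refine ⟨key, ?_⟩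
  -- V is antitone on [0, ∞)
  have hmono : AntitoneOn V (Set.Ici 0) := by
    refine antitoneOn_of_deriv_nonpos (convex_Ici 0) hVc.continuousOn
      (hVd.differentiableOn) ?_
    intro s hs
    rw [interior_Ici] at hs
    have h1 := key s hs.le
    have h2 : 0 ≤ α (V s) := hαnn _ ⟨hVnn s, hVa s hs.le⟩
    linarith
  have hWanti : Antitone (fun t : ℝ => V (max t 0)) := fun s t hst =>
    hmono (Set.mem_Ici.mpr (le_max_right s 0)) (Set.mem_Ici.mpr (le_max_right t 0))
      (max_le_max hst le_rfl)
  have hWbdd : BddBelow (Set.range fun t : ℝ => V (max t 0)) :=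
    ⟨0, by rintro y ⟨t, rfl⟩; exact hVnn _⟩
  have hWtend : Filter.Tendsto (fun t : ℝ => V (max t 0)) Filter.atTop
      (nhds (⨅ t : ℝ, V (max t 0))) := tendsto_atTop_ciInf hWanti hWbdd
  set L := ⨅ t : ℝ, V (max t 0) with hL
  have hL0 : 0 ≤ L := le_ciInf fun t => hVnn _
  have hLle : ∀ t : ℝ, 0 ≤ t → L ≤ V t := by
    intro t ht
    have h := hWanti.le_of_tendsto hWtend t
    rwa [max_eq_left ht] at h
  have hLa : L < a := lt_of_le_of_lt (hLle 0 le_rfl) hV0a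
  have hVtend : Filter.Tendsto V Filter.atTop (nhds L) := by
    refine hWtend.congr' ?_
    filter_upwards [Filter.eventually_ge_atTop (0:ℝ)] with t ht
    show V (max t 0) = V t
    rw [max_eq_left ht]
  have hLeq : L = 0 := by
    by_contra hne
    have hLpos : 0 < L := lt_of_le_of_ne hL0 (Ne.symm hne)
    have hαL : 0 < α L := by
      have := hαm ⟨le_rfl, ha⟩ ⟨hL0, hLa⟩ hLpos
      rwa [hα0] at this
    set g : ℝ → ℝ := fun t => V t + α L * t with hg
    have hgd : ∀ t : ℝ, HasDerivAt g (deriv V t + α L) t := fun t => by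
      have h1 : HasDerivAt (fun t : ℝ => α L * t) (α L) t := by
        simpa using (hasDerivAt_id t).const_mul (α L)
      exact ((hVd t).hasDerivAt).add h1
    have hganti : AntitoneOn g (Set.Ici 0) := by
      refine antitoneOn_of_deriv_nonpos (convex_Ici 0)
        (hVc.add (continuous_const.mul continuous_id)).continuousOn
        (fun s _ => (hgd s).differentiableAt.differentiableWithinAt) ?_
      intro s hs
      rw [interior_Ici] at hs
      rw [(hgd s).deriv]
      have h1 := key s hs.le
      have h2 : α L ≤ α (V s) :=
        hαm.monotoneOn ⟨hL0, hLa⟩ ⟨hVnn s, hVa s hs.le⟩ (hLle s hs.le)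
      linarith
    set T := (V 0 + 1) / α L with hT
    have hTnn : 0 ≤ T := div_nonneg (by linarith [hVnn 0]) hαL.le
    have hgT : g T ≤ g 0 := hganti Set.self_mem_Ici (Set.mem_Ici.mpr hTnn) hTnn
    have hmul : α L * T = V 0 + 1 := by
      rw [hT, mul_div_cancel₀ _ (ne_of_gt hαL)]
    have hg0 : g 0 = V 0 := by simp [hg]
    have hgT' : g T = V T + (V 0 + 1) := by rw [hg]; simp [hmul]
    have := hVnn T
    rw [hg0, hgT'] at hgT
    linarith
  rw [← hLeq]
  exact hVtend
end
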